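/- The sequence (θ_m) satisfies θ_0 > 0 and θ_m < 0 for every integer m ≥ 1. -/
import Mathlib


/-- The sequence `θ_m`. -/
noncomputable def seqTheta (α : ℝ) : ℕ → ℝ
  | 0 => ((α + 1) / (2 * α)) ^ α
  | 1 => (α - 1) * (2 * α + 1) / (α + 1) * seqTheta α 0
  | (m + 2) =>
      2 * α / (((m : ℝ) + 2) * (1 + α)) *
        (((((m : ℝ) + 2) - 1) / α - (1 - α) / (2 * α) * (2 * α + 1)) * seqTheta α (m + 1) +
          (1 - α) / (2 * α) * (3 - ((m : ℝ) + 2)) * seqTheta α m)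

theorem seqTheta_sign (α : ℝ) (hα : α ∈ Set.Ioo (0 : ℝ) 1) :
    0 < seqTheta α 0 ∧ ∀ m : ℕ, 1 ≤ m → seqTheta α m < 0 := by
  obtain ⟨ha, hb⟩ := hα
  have hα1 : (0:ℝ) < 1 + α := by linarith
  have h1a : (0:ℝ) ≤ 1 - α := by linarith
  have h0 : 0 < seqTheta α 0 := by
    show 0 < ((α + 1) / (2 * α)) ^ α
    exact Real.rpow_pos_of_pos (by positivity) α
  -- clean recurrence
  have key : ∀ m : ℕ, ((m:ℝ)+2)*(1+α) * seqTheta α (m+2)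
      = (2*((m:ℝ)+1) - (1-α)*(2*α+1)) * seqTheta α (m+1)
        + (1-α)*(1-(m:ℝ)) * seqTheta α m := by
    intro m
    have hm : ((m:ℝ)+2) ≠ 0 := by positivity
    have e : seqTheta α (m+2) =
        2 * α / (((m : ℝ) + 2) * (1 + α)) *
        (((((m : ℝ) + 2) - 1) / α - (1 - α) / (2 * α) * (2 * α + 1)) * seqTheta α (m + 1) +
          (1 - α) / (2 * α) * (3 - ((m : ℝ) + 2)) * seqTheta α m) := by
      rw [seqTheta]
    rw [e]
    field_simp
    ring
  have e1 : seqTheta α 1 = (α - 1) * (2 * α + 1) / (α + 1) * seqTheta α 0 := by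
    conv_lhs => rw [seqTheta]
  have h1 : seqTheta α 1 < 0 := by
    rw [e1]
    apply mul_neg_of_neg_of_pos _ h0
    apply div_neg_of_neg_of_pos
    · nlinarith
    · linarith
  have hb1 : (α+1) * seqTheta α 1 = (α-1)*(2*α+1) * seqTheta α 0 := by
    rw [e1]; field_simp
  have hk0 := key 0
  push_cast at hk0
  -- 2*(1+α)^2 * θ2 = -4 α^3 (1-α) θ0
  have h2eq : 2*(1+α)^2 * seqTheta α 2 = -(4*α^3*(1-α)) * seqTheta α 0 := by
    linear_combination (α+1) * hk0 + (2 - (1-α)*(2*α+1)) * hb1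
  have hpos2 : 0 < 4*α^3*(1-α) * seqTheta α 0 :=
    mul_pos (mul_pos (by positivity) (by linarith)) h0
  have h2 : seqTheta α 2 < 0 := by nlinarith [mul_pos hα1 hα1]
  have hk1 := key 1
  push_cast at hk1
  have h3 : seqTheta α 3 < 0 := by
    nlinarith [mul_nonneg (mul_nonneg h1a (by linarith : (0:ℝ) ≤ 2*α+1)) (neg_nonneg.mpr h2.le)]
  -- induction: P m : θ(m+2) < 0 ∧ (m+3) θ(m+3) ≤ (m+1) θ(m+2)
  have ind : ∀ m : ℕ, seqTheta α (m+2) < 0 ∧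
      ((m:ℝ)+3) * seqTheta α (m+3) ≤ ((m:ℝ)+1) * seqTheta α (m+2) := by
    intro m
    induction m with
    | zero =>
      refine ⟨h2, ?_⟩
      push_cast
      -- 3(1+α)θ3 = (3-α+2α²)θ2 ; need 3θ3 ≤ θ2
      nlinarith [mul_nonneg (by nlinarith [sq_nonneg (1-α)] : (0:ℝ) ≤ 2 - 2*α + 2*α^2)
        (neg_nonneg.mpr h2.le)]
    | succ n ih =>
      obtain ⟨ihneg, ihinv⟩ := ih
      have hn0 : (0:ℝ) ≤ (n:ℝ) := Nat.cast_nonneg n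
      have t1 : ((n:ℝ)+1) * seqTheta α (n+2) < 0 :=
        mul_neg_of_pos_of_neg (by linarith) ihneg
      have hneg3 : seqTheta α (n+3) < 0 := by
        by_contra hcon
        push_neg at hcon
        have : (0:ℝ) ≤ ((n:ℝ)+3) * seqTheta α (n+3) := mul_nonneg (by linarith) hcon
        linarith
      have hk := key (n+2)
      push_cast at hk
      constructor
      · exact hneg3
      · push_cast
        -- show (n+4) θ(n+4) ≤ (n+2) θ(n+3)
        have A : ((n:ℝ)+4)*(1+α) * seqTheta α (n+4)
            ≤ (((n:ℝ)+3)*(1+α) - (1-α)*(2*α+1)) * seqTheta α (n+3) := by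
          nlinarith [mul_nonneg h1a (sub_nonneg.mpr ihinv)]
        have B : (((n:ℝ)+3)*(1+α) - (1-α)*(2*α+1)) * seqTheta α (n+3)
            ≤ ((n:ℝ)+2)*(1+α) * seqTheta α (n+3) := by
          nlinarith [mul_nonneg (sq_nonneg α) (neg_nonneg.mpr hneg3.le)]
        have AB := A.trans B
        have AB' : (1+α) * (((n:ℝ)+4) * seqTheta α (n+4))
            ≤ (1+α) * (((n:ℝ)+2) * seqTheta α (n+3)) := by linarith [AB]
        have final := le_of_mul_le_mul_left AB' hα1
        show ((n:ℝ)+1+3) * seqTheta α (n+4) ≤ ((n:ℝ)+1+1) * seqTheta α (n+3)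
        linarith [final]
  refine ⟨h0, ?_⟩
  intro m hm
  match m, hm with
  | 1, _ => exact h1
  | (k+2), _ => exact (ind k).1
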